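/- Let p be an odd prime, and let b, c be integers with Jacobi symbol ((b² + 4c)/p) = -1. In the ring (ℤ/pℤ)[x]/(x² − b·x − c), letting x denote the image of the indeterminate, one has x^p = b − x. -/

import Mathlib

open Polynomial

/-- The Frobenius action on which the QFT is based: for an odd prime `p` with
`((b² + 4c)/p) = -1`, in `(ℤ/pℤ)[x]/(x² - bx - c)` one has `x^p = b - x`. -/
theorem qft_frobenius (p : ℕ) (hp : p.Prime) (hodd : Odd p)
    (b c : ℤ) (hbc : jacobiSym (b ^ 2 + 4 * c) p = -1) :
    (AdjoinRoot.root (X ^ 2 - C (b : ZMod p) * X - C (c : ZMod p))) ^ p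
      = AdjoinRoot.of (X ^ 2 - C (b : ZMod p) * X - C (c : ZMod p)) (b : ZMod p)
        - AdjoinRoot.root (X ^ 2 - C (b : ZMod p) * X - C (c : ZMod p)) := by
  haveI := Fact.mk hp
  set b' : ZMod p := (b : ZMod p) with hb'
  set c' : ZMod p := (c : ZMod p) with hc'
  set f : (ZMod p)[X] := X ^ 2 - C b' * X - C c' with hf
  -- f has no root in ZMod p
  have hnoroot : ∀ a : ZMod p, a ^ 2 - b' * a - c' ≠ 0 := by
    intro a ha
    apply (legendreSym.eq_neg_one_iff p).mp
      (by rwa [jacobiSym.legendreSym.to_jacobiSym])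
    have hcast : ((b ^ 2 + 4 * c : ℤ) : ZMod p) = b' ^ 2 + 4 * c' := by
      rw [hb', hc']; push_cast; ring
    exact ⟨2 * a - b', by rw [hcast]; linear_combination (-4 : ZMod p) * ha⟩
  have hmonic : f.Monic := by rw [hf]; monicity!
  have hdeg : f.natDegree = 2 := by rw [hf]; compute_degree!
  have hirr : Irreducible f := by
    rw [hmonic.irreducible_iff_roots_eq_zero_of_degree_le_three (by omega) (by omega)]
    rw [Multiset.eq_zero_iff_forall_notMem]
    intro a ha
    rw [mem_roots hmonic.ne_zero] at ha
    apply hnoroot a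
    simpa [f, IsRoot] using ha
  haveI := Fact.mk hirr
  set r : AdjoinRoot f := AdjoinRoot.root f with hr
  have hrel : r ^ 2 = AdjoinRoot.of f b' * r + AdjoinRoot.of f c' := by
    have h0 := AdjoinRoot.eval₂_root f
    simp only [hf, eval₂_sub, eval₂_mul, eval₂_pow, eval₂_X, eval₂_C] at h0
    linear_combination h0
  haveI : CharP (AdjoinRoot f) p := charP_of_injective_ringHom (AdjoinRoot.of f).injective p
  haveI : ExpChar (AdjoinRoot f) p := .prime hp
  have hofpow : ∀ a : ZMod p, (AdjoinRoot.of f a) ^ p = AdjoinRoot.of f a := by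
    intro a
    rw [← map_pow, ZMod.pow_card]
  have hu : (r ^ p) ^ 2 = AdjoinRoot.of f b' * r ^ p + AdjoinRoot.of f c' := by
    have h : (r ^ 2) ^ p = (AdjoinRoot.of f b' * r + AdjoinRoot.of f c') ^ p := by rw [hrel]
    rw [add_pow_char, mul_pow, hofpow, hofpow] at h
    calc (r ^ p) ^ 2 = (r ^ 2) ^ p := by rw [← pow_mul, ← pow_mul, mul_comm]
      _ = _ := h
  have key : (r ^ p - r) * (r ^ p - (AdjoinRoot.of f b' - r)) = 0 := by
    linear_combination hu - hrel
  rcases mul_eq_zero.mp key with h | h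
  · exfalso
    have hrp : r ^ p = r := by rwa [sub_eq_zero] at h
    have hmin : minpoly (ZMod p) r = f := by
      have h1 := AdjoinRoot.minpoly_root (f := f) hmonic.ne_zero
      rwa [hmonic.leadingCoeff, inv_one, map_one, mul_one] at h1
    have hdvd : f ∣ (X ^ p - X : (ZMod p)[X]) := by
      rw [← hmin]
      apply minpoly.dvd
      simp [hrp]
    have hsplits : Splits (X ^ p - X : (ZMod p)[X]) := by
      rw [splits_iff_card_roots]
      rw [show (X ^ p - X : (ZMod p)[X]) = X ^ Fintype.card (ZMod p) - X by rw [ZMod.card]]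
      rw [FiniteField.roots_X_pow_card_sub_X,
        FiniteField.X_pow_card_sub_X_natDegree_eq _ Fintype.one_lt_card]
      simp [Finset.card_univ]
    have hfs : Splits f :=
      hsplits.of_dvd (FiniteField.X_pow_card_sub_X_ne_zero _ hp.one_lt) hdvd
    obtain ⟨a, haroot⟩ := Splits.exists_eval_eq_zero hfs
      (by rw [degree_eq_natDegree hmonic.ne_zero, hdeg]; norm_num)
    apply hnoroot a
    simpa [f] using haroot
  · linear_combination h
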